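/- arXiv:1110.3508 — 2 statements merged into one kernel-verified Lean document; each statement's English description precedes it below -/
import Mathlib

section
/- Let μ be the countable product, over n ∈ ℕ, of the standard real Gaussian probability measure N(0,1), a probability measure on ℝ^ℕ. For finitely supported sequences c, d : ℕ → ℝ, the squared L²(μ)-distance between the functions ω(c)(z) = exp(√2·i·Σ_n c(n)·z(n)) and ω(d)(z) = exp(√2·i·Σ_n d(n)·z(n)) equals 2(1 − exp(−Σ_n (c(n) − d(n))²)); that is, ∫ |ω(c)(z) − ω(d)(z)|² dμ(z) = 2(1 − e^{−‖c−d‖₂²}). (This is the norm computation in Lemma 3.2 of the paper.) -/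
open MeasureTheory ProbabilityTheory Real
open scoped ENNReal NNReal

lemma gauss_cexp (t : ℝ) :
    ∫ x : ℝ, Complex.exp ((t * x : ℝ) * Complex.I) ∂(gaussianReal 0 1)
      = Real.exp (-t ^ 2 / 2) := by
  rw [gaussianReal_of_var_ne_zero 0 one_ne_zero]
  have hmeas : Measurable fun x : ℝ => (gaussianPDFReal 0 1 x).toNNReal :=
    (measurable_gaussianPDFReal 0 1).real_toNNReal
  have hd : (gaussianPDF 0 1) = fun x => (((gaussianPDFReal 0 1 x).toNNReal : ℝ≥0) : ℝ≥0∞) := rfl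
  rw [hd, integral_withDensity_eq_integral_smul hmeas]
  have hpt : ∀ x : ℝ, ((gaussianPDFReal 0 1 x).toNNReal : ℝ≥0)
      • Complex.exp ((t * x : ℝ) * Complex.I)
      = ((Real.sqrt (2 * π))⁻¹ : ℝ) *
        Complex.exp (-(1/2 : ℂ) * x ^ 2 + (t * Complex.I) * x + 0) := by
    intro x
    rw [NNReal.smul_def, Real.coe_toNNReal _ (gaussianPDFReal_nonneg 0 1 x),
      gaussianPDFReal, Complex.real_smul, Complex.ofReal_mul, mul_assoc,
      Complex.ofReal_exp, ← Complex.exp_add]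
    simp only [NNReal.coe_one, mul_one]
    congr 1
    push_cast
    ring
  simp_rw [hpt]
  rw [integral_const_mul, integral_cexp_quadratic (by norm_num) (t * Complex.I) 0]
  have h2 : ((π : ℂ) / -(-(1/2 : ℂ))) = ((2 * π : ℝ) : ℂ) := by push_cast; ring
  rw [h2]
  have h3 : ((2 * π : ℝ) : ℂ) ^ (1/2 : ℂ) = ((Real.sqrt (2 * π) : ℝ) : ℂ) := by
    rw [Real.sqrt_eq_rpow, Complex.ofReal_cpow (by positivity)]
    norm_num
  rw [h3]
  have h4 : (0 : ℂ) - (t * Complex.I) ^ 2 / (4 * -(1/2 : ℂ)) = ((-t^2/2 : ℝ) : ℂ) := by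
    push_cast
    rw [mul_pow, Complex.I_sq]
    ring
  rw [h4, ← Complex.ofReal_exp, ← mul_assoc, ← Complex.ofReal_mul,
    inv_mul_cancel₀ (by positivity), Complex.ofReal_one, one_mul]

lemma integrable_cexp_I {α : Type*} [MeasurableSpace α] (ν : Measure α) [IsFiniteMeasure ν]
    {θ : α → ℝ} (hθ : Measurable θ) :
    Integrable (fun x => Complex.exp ((θ x : ℂ) * Complex.I)) ν := by
  refine (integrable_const (1 : ℝ)).mono'
    (Complex.measurable_exp.comp ((Complex.measurable_ofReal.comp hθ).mul
      measurable_const)).aestronglyMeasurable (ae_of_all _ fun x => ?_)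
  simp [Complex.norm_exp_ofReal_mul_I]

lemma gauss_cos (t : ℝ) :
    ∫ x : ℝ, Real.cos (t * x) ∂(gaussianReal 0 1) = Real.exp (-t ^ 2 / 2) := by
  have hint : Integrable (fun x : ℝ => Complex.exp (((t * x : ℝ) : ℂ) * Complex.I))
      (gaussianReal 0 1) := integrable_cexp_I _ (measurable_const.mul measurable_id)
  have h2 := integral_re hint
  simp only [RCLike.re_to_complex] at h2
  rw [gauss_cexp t] at h2
  simp only [Complex.exp_ofReal_mul_I_re, Complex.ofReal_re] at h2
  exact h2

lemma gauss_sin (t : ℝ) :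
    ∫ x : ℝ, Real.sin (t * x) ∂(gaussianReal 0 1) = 0 := by
  have hint : Integrable (fun x : ℝ => Complex.exp (((t * x : ℝ) : ℂ) * Complex.I))
      (gaussianReal 0 1) := integrable_cexp_I _ (measurable_const.mul measurable_id)
  have h2 := integral_im hint
  simp only [RCLike.im_to_complex] at h2
  rw [gauss_cexp t] at h2
  simp only [Complex.exp_ofReal_mul_I_im, Complex.ofReal_im] at h2
  exact h2

lemma norm_sq_exp_sub (A B : ℝ) :
    ‖Complex.exp ((A : ℂ) * Complex.I) - Complex.exp ((B : ℂ) * Complex.I)‖ ^ 2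
      = 2 - 2 * Real.cos (A - B) := by
  rw [Complex.exp_mul_I, Complex.exp_mul_I, ← Complex.ofReal_cos, ← Complex.ofReal_sin,
    ← Complex.ofReal_cos, ← Complex.ofReal_sin]
  have h : (↑(Real.cos A) + ↑(Real.sin A) * Complex.I)
      - (↑(Real.cos B) + ↑(Real.sin B) * Complex.I)
      = ((Real.cos A - Real.cos B : ℝ) : ℂ) + ((Real.sin A - Real.sin B : ℝ) : ℂ) * Complex.I := by
    push_cast; ring
  rw [h, Complex.sq_norm, Complex.normSq_add_mul_I, Real.cos_sub]
  nlinarith [Real.sin_sq_add_cos_sq A, Real.sin_sq_add_cos_sq B]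

lemma int_bdd {α : Type*} [MeasurableSpace α] {ν : Measure α} [IsFiniteMeasure ν]
    {f : α → ℝ} (hm : Measurable f) (hb : ∀ z, |f z| ≤ 1) : Integrable f ν :=
  (integrable_const (1 : ℝ)).mono' hm.aestronglyMeasurable (ae_of_all _ fun z => by
    simpa using hb z)

lemma char_aux (μ : Measure (ℕ → ℝ)) [IsProbabilityMeasure μ]
    (hindep : iIndepFun
      (fun n (z : ℕ → ℝ) => z n) μ)
    (hdist : ∀ n : ℕ, μ.map (fun z : ℕ → ℝ => z n) = gaussianReal 0 1)
    (a : ℕ → ℝ) (s : Finset ℕ) :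
    (∫ z, Real.cos (∑ n ∈ s, Real.sqrt 2 * a n * z n) ∂μ
        = Real.exp (-∑ n ∈ s, (a n) ^ 2))
    ∧ (∫ z, Real.sin (∑ n ∈ s, Real.sqrt 2 * a n * z n) ∂μ = 0) := by
  classical
  set Y : ℕ → (ℕ → ℝ) → ℝ := fun n z => Real.sqrt 2 * a n * z n with hY
  have hYmeas : ∀ n, Measurable (Y n) := fun n => (measurable_pi_apply n).const_mul _
  have hYindep : iIndepFun Y μ :=
    hindep.comp (fun n x => Real.sqrt 2 * a n * x)
      (fun n => (measurable_id.const_mul _))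
  -- single coordinate integrals
  have hcos1 : ∀ i : ℕ, ∫ z, Real.cos (Y i z) ∂μ = Real.exp (-(a i) ^ 2) := by
    intro i
    have hmap : ∫ z, Real.cos (Real.sqrt 2 * a i * z i) ∂μ
        = ∫ x, Real.cos (Real.sqrt 2 * a i * x) ∂(gaussianReal 0 1) := by
      rw [← hdist i, integral_map (measurable_pi_apply i).aemeasurable
        (Real.measurable_cos.comp (measurable_id.const_mul _)).aestronglyMeasurable]
    rw [hY]
    simp only []
    rw [hmap, gauss_cos]
    congr 1
    rw [mul_pow, Real.sq_sqrt (by norm_num : (0:ℝ) ≤ 2)]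
    ring
  have hsin1 : ∀ i : ℕ, ∫ z, Real.sin (Y i z) ∂μ = 0 := by
    intro i
    have hmap : ∫ z, Real.sin (Real.sqrt 2 * a i * z i) ∂μ
        = ∫ x, Real.sin (Real.sqrt 2 * a i * x) ∂(gaussianReal 0 1) := by
      rw [← hdist i, integral_map (measurable_pi_apply i).aemeasurable
        (Real.measurable_sin.comp (measurable_id.const_mul _)).aestronglyMeasurable]
    rw [hY]
    simp only []
    rw [hmap, gauss_sin]
  induction s using Finset.induction with
  | empty => simp
  | @insert i s hi ih =>
    obtain ⟨ihc, ihs⟩ := ih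
    have hSmeas : Measurable (fun z : ℕ → ℝ => ∑ n ∈ s, Real.sqrt 2 * a n * z n) :=
      Finset.measurable_sum s (fun n _ => hYmeas n)
    have hsum_apply : ∀ z : ℕ → ℝ, (∑ n ∈ s, Y n) z = ∑ n ∈ s, Real.sqrt 2 * a n * z n := by
      intro z; simp [hY]
    have hSm : Measurable (∑ n ∈ s, Y n) := by
      have h' : (∑ n ∈ s, Y n) = fun z => ∑ n ∈ s, Real.sqrt 2 * a n * z n :=
        funext hsum_apply
      rw [h']; exact hSmeas
    have hIF : IndepFun (Y i) (∑ n ∈ s, Y n) μ :=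
      (hYindep.indepFun_finsetSum_of_notMem hYmeas hi).symm
    have hIcc : ∫ z, Real.cos (Y i z) * Real.cos ((∑ n ∈ s, Y n) z) ∂μ
        = (∫ z, Real.cos (Y i z) ∂μ) * ∫ z, Real.cos ((∑ n ∈ s, Y n) z) ∂μ :=
      (hIF.comp Real.measurable_cos Real.measurable_cos).integral_mul_eq_mul_integral
        (Real.measurable_cos.comp (hYmeas i)).aestronglyMeasurable
        (Real.measurable_cos.comp hSm).aestronglyMeasurable
    have hIss : ∫ z, Real.sin (Y i z) * Real.sin ((∑ n ∈ s, Y n) z) ∂μ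
        = (∫ z, Real.sin (Y i z) ∂μ) * ∫ z, Real.sin ((∑ n ∈ s, Y n) z) ∂μ :=
      (hIF.comp Real.measurable_sin Real.measurable_sin).integral_mul_eq_mul_integral
        (Real.measurable_sin.comp (hYmeas i)).aestronglyMeasurable
        (Real.measurable_sin.comp hSm).aestronglyMeasurable
    have hIsc : ∫ z, Real.sin (Y i z) * Real.cos ((∑ n ∈ s, Y n) z) ∂μ
        = (∫ z, Real.sin (Y i z) ∂μ) * ∫ z, Real.cos ((∑ n ∈ s, Y n) z) ∂μ :=
      (hIF.comp Real.measurable_sin Real.measurable_cos).integral_mul_eq_mul_integral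
        (Real.measurable_sin.comp (hYmeas i)).aestronglyMeasurable
        (Real.measurable_cos.comp hSm).aestronglyMeasurable
    have hIcs : ∫ z, Real.cos (Y i z) * Real.sin ((∑ n ∈ s, Y n) z) ∂μ
        = (∫ z, Real.cos (Y i z) ∂μ) * ∫ z, Real.sin ((∑ n ∈ s, Y n) z) ∂μ :=
      (hIF.comp Real.measurable_cos Real.measurable_sin).integral_mul_eq_mul_integral
        (Real.measurable_cos.comp (hYmeas i)).aestronglyMeasurable
        (Real.measurable_sin.comp hSm).aestronglyMeasurable
    have hintcc : Integrable (fun z => Real.cos (Y i z) * Real.cos ((∑ n ∈ s, Y n) z)) μ :=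
      int_bdd ((Real.measurable_cos.comp (hYmeas i)).mul
        (Real.measurable_cos.comp hSm))
        (fun z => by rw [abs_mul]; exact mul_le_one₀ (Real.abs_cos_le_one _) (abs_nonneg _) (Real.abs_cos_le_one _))
    have hintss : Integrable (fun z => Real.sin (Y i z) * Real.sin ((∑ n ∈ s, Y n) z)) μ :=
      int_bdd ((Real.measurable_sin.comp (hYmeas i)).mul
        (Real.measurable_sin.comp hSm))
        (fun z => by rw [abs_mul]; exact mul_le_one₀ (Real.abs_sin_le_one _) (abs_nonneg _) (Real.abs_sin_le_one _))
    have hintsc : Integrable (fun z => Real.sin (Y i z) * Real.cos ((∑ n ∈ s, Y n) z)) μ :=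
      int_bdd ((Real.measurable_sin.comp (hYmeas i)).mul
        (Real.measurable_cos.comp hSm))
        (fun z => by rw [abs_mul]; exact mul_le_one₀ (Real.abs_sin_le_one _) (abs_nonneg _) (Real.abs_cos_le_one _))
    have hintcs : Integrable (fun z => Real.cos (Y i z) * Real.sin ((∑ n ∈ s, Y n) z)) μ :=
      int_bdd ((Real.measurable_cos.comp (hYmeas i)).mul
        (Real.measurable_sin.comp hSm))
        (fun z => by rw [abs_mul]; exact mul_le_one₀ (Real.abs_cos_le_one _) (abs_nonneg _) (Real.abs_sin_le_one _))
    have hexpand : ∀ z : ℕ → ℝ, ∑ n ∈ insert i s, Real.sqrt 2 * a n * z n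
        = Y i z + (∑ n ∈ s, Y n) z := by
      intro z
      rw [Finset.sum_insert hi, hsum_apply]
    constructor
    · calc ∫ z, Real.cos (∑ n ∈ insert i s, Real.sqrt 2 * a n * z n) ∂μ
          = ∫ z, (Real.cos (Y i z) * Real.cos ((∑ n ∈ s, Y n) z)
              - Real.sin (Y i z) * Real.sin ((∑ n ∈ s, Y n) z)) ∂μ := by
            refine integral_congr_ae (ae_of_all _ fun z => ?_)
            simp only [hexpand z, Real.cos_add]
        _ = (∫ z, Real.cos (Y i z) * Real.cos ((∑ n ∈ s, Y n) z) ∂μ)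
              - ∫ z, Real.sin (Y i z) * Real.sin ((∑ n ∈ s, Y n) z) ∂μ :=
            integral_sub hintcc hintss
        _ = Real.exp (-∑ n ∈ insert i s, (a n) ^ 2) := by
            rw [hIcc, hIss, hcos1, hsin1]
            simp_rw [hsum_apply]
            rw [ihc, ihs, Finset.sum_insert hi, ← Real.exp_add]
            ring_nf
    · calc ∫ z, Real.sin (∑ n ∈ insert i s, Real.sqrt 2 * a n * z n) ∂μ
          = ∫ z, (Real.sin (Y i z) * Real.cos ((∑ n ∈ s, Y n) z)
              + Real.cos (Y i z) * Real.sin ((∑ n ∈ s, Y n) z)) ∂μ := by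
            refine integral_congr_ae (ae_of_all _ fun z => ?_)
            simp only [hexpand z, Real.sin_add]
        _ = (∫ z, Real.sin (Y i z) * Real.cos ((∑ n ∈ s, Y n) z) ∂μ)
              + ∫ z, Real.cos (Y i z) * Real.sin ((∑ n ∈ s, Y n) z) ∂μ :=
            integral_add hintsc hintcs
        _ = 0 := by
            rw [hIsc, hIcs, hsin1]
            simp_rw [hsum_apply]
            rw [ihs]
            ring


/-- **Norm computation for the Gaussian functor** (Lemma 3.2).
`μ` is the countable product over `n : ℕ` of the standard Gaussian measure `N(0,1)` on `ℝ`,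
encoded as: `μ` is a probability measure on `ℝ^ℕ` whose coordinate functions are i.i.d.
standard Gaussians.  For finitely supported `c, d : ℕ →₀ ℝ`, the squared `L²(μ)`-distance
between `ω(c)(z) = exp(√2·i·Σ_n c n · z n)` and `ω(d)` equals `2(1 − e^{−‖c−d‖₂²})`. -/
theorem gaussian_omega_dist_sq
    (μ : Measure (ℕ → ℝ)) [IsProbabilityMeasure μ]
    (hindep : iIndepFun
      (fun n (z : ℕ → ℝ) => z n) μ)
    (hdist : ∀ n : ℕ, μ.map (fun z : ℕ → ℝ => z n) = gaussianReal 0 1)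
    (c d : ℕ →₀ ℝ) :
    ∫ z : ℕ → ℝ,
        ‖Complex.exp ((Real.sqrt 2 : ℂ) * Complex.I *
            ∑ n ∈ c.support ∪ d.support, (c n : ℂ) * (z n : ℂ))
          - Complex.exp ((Real.sqrt 2 : ℂ) * Complex.I *
            ∑ n ∈ c.support ∪ d.support, (d n : ℂ) * (z n : ℂ))‖ ^ 2 ∂μ
      = 2 * (1 - Real.exp (- ∑ n ∈ c.support ∪ d.support, (c n - d n) ^ 2)) := by
  classical
  set s : Finset ℕ := c.support ∪ d.support with hs
  have hA : ∀ (e : ℕ →₀ ℝ) (z : ℕ → ℝ),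
      (Real.sqrt 2 : ℂ) * Complex.I * ∑ n ∈ s, (e n : ℂ) * (z n : ℂ)
        = ((∑ n ∈ s, Real.sqrt 2 * e n * z n : ℝ) : ℂ) * Complex.I := by
    intro e z
    push_cast
    rw [Finset.mul_sum, Finset.sum_mul]
    exact Finset.sum_congr rfl fun n _ => by ring
  have hpt : ∀ z : ℕ → ℝ,
      ‖Complex.exp ((Real.sqrt 2 : ℂ) * Complex.I * ∑ n ∈ s, (c n : ℂ) * (z n : ℂ))
        - Complex.exp ((Real.sqrt 2 : ℂ) * Complex.I * ∑ n ∈ s, (d n : ℂ) * (z n : ℂ))‖ ^ 2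
      = 2 - 2 * Real.cos (∑ n ∈ s, Real.sqrt 2 * (c n - d n) * z n) := by
    intro z
    rw [hA c z, hA d z, norm_sq_exp_sub]
    have hsum : (∑ n ∈ s, Real.sqrt 2 * c n * z n) - (∑ n ∈ s, Real.sqrt 2 * d n * z n)
        = ∑ n ∈ s, Real.sqrt 2 * (c n - d n) * z n := by
      rw [← Finset.sum_sub_distrib]
      exact Finset.sum_congr rfl fun n _ => by ring
    rw [hsum]
  have θmeas : Measurable (fun z : ℕ → ℝ => ∑ n ∈ s, Real.sqrt 2 * (c n - d n) * z n) :=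
    Finset.measurable_sum s fun n _ => (measurable_pi_apply n).const_mul _
  have hcosint : Integrable
      (fun z : ℕ → ℝ => Real.cos (∑ n ∈ s, Real.sqrt 2 * (c n - d n) * z n)) μ :=
    int_bdd (Real.measurable_cos.comp θmeas) (fun z => Real.abs_cos_le_one _)
  calc ∫ z : ℕ → ℝ,
        ‖Complex.exp ((Real.sqrt 2 : ℂ) * Complex.I * ∑ n ∈ s, (c n : ℂ) * (z n : ℂ))
          - Complex.exp ((Real.sqrt 2 : ℂ) * Complex.I * ∑ n ∈ s, (d n : ℂ) * (z n : ℂ))‖ ^ 2 ∂μ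
      = ∫ z : ℕ → ℝ,
          (2 - 2 * Real.cos (∑ n ∈ s, Real.sqrt 2 * (c n - d n) * z n)) ∂μ :=
        integral_congr_ae (ae_of_all _ fun z => hpt z)
    _ = (∫ _ : ℕ → ℝ, (2 : ℝ) ∂μ)
          - ∫ z : ℕ → ℝ, 2 * Real.cos (∑ n ∈ s, Real.sqrt 2 * (c n - d n) * z n) ∂μ :=
        integral_sub (integrable_const 2) (hcosint.const_mul 2)
    _ = 2 * (1 - Real.exp (- ∑ n ∈ s, (c n - d n) ^ 2)) := by
        rw [integral_const, integral_const_mul]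
        have := (char_aux μ hindep hdist (fun n => c n - d n) s).1
        rw [this]
        simp [measure_univ]
        ring
end

section
/- Let μ be the countable product, over n ∈ ℕ, of the standard real Gaussian probability measure N(0,1), a probability measure on ℝ^ℕ, and let c : ℕ → ℝ be square-summable, i.e. Σ_n c(n)² < ∞. For N ∈ ℕ define ω_N : ℝ^ℕ → ℂ by ω_N(z) = exp(√2·i·Σ_{n<N} c(n)·z(n)). Then (ω_N) is a Cauchy sequence in L²(μ; ℂ), and there exists g ∈ L²(μ; ℂ) such that ω_N → g in L²(μ), |g(z)| = 1 for μ-almost every z, and ∫ g dμ = exp(−Σ_n c(n)²). (This is the extension of the Gaussian exponential map ω to all of ℓ², Lemma 3.2 of the paper.) -/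
open MeasureTheory ProbabilityTheory Filter
open scoped ENNReal NNReal Real Topology
open Complex

lemma gauss_char (t : ℝ) :
    ∫ x : ℝ, Complex.exp ((t : ℂ) * Complex.I * (x : ℂ)) ∂(gaussianReal 0 1) =
      (Real.exp (-(t ^ 2) / 2) : ℂ) := by
  rw [gaussianReal_of_var_ne_zero 0 one_ne_zero]
  have hmeas : Measurable fun x : ℝ => (gaussianPDFReal 0 1 x).toNNReal :=
    (measurable_gaussianPDFReal 0 1).real_toNNReal
  have hpdf : gaussianPDF 0 1 = fun x => ((gaussianPDFReal 0 1 x).toNNReal : ℝ≥0∞) := by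
    ext x; rw [gaussianPDF]; rfl
  rw [hpdf, integral_withDensity_eq_integral_smul hmeas]
  have h1 : ∀ x : ℝ, ((gaussianPDFReal 0 1 x).toNNReal : ℝ≥0) • Complex.exp ((t : ℂ) * Complex.I * (x : ℂ))
      = ((Real.sqrt (2 * Real.pi))⁻¹ : ℂ) * Complex.exp (-(1/2 : ℂ) * x ^ 2 + (t : ℂ) * Complex.I * x + 0) := by
    intro x
    rw [NNReal.smul_def, Real.coe_toNNReal _ (gaussianPDFReal_nonneg 0 1 x)]
    rw [gaussianPDFReal]
    push_cast
    rw [real_smul]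
    push_cast
    rw [show (-(1/2 : ℂ) * x ^ 2 + (t : ℂ) * Complex.I * x + 0) = ((-(x-0)^2/(2*1) : ℝ) : ℂ) + (t : ℂ) * Complex.I * x by push_cast; ring]
    rw [Complex.exp_add, ← Complex.ofReal_exp]
    push_cast
    ring
  simp_rw [h1]
  rw [integral_const_mul, integral_cexp_quadratic (by norm_num : (-(1/2:ℂ)).re < 0)]
  have h2 : ((Real.pi : ℂ) / -(-(1/2:ℂ))) ^ (1/2 : ℂ) = (Real.sqrt (2 * Real.pi) : ℂ) := by
    rw [show ((Real.pi : ℂ) / -(-(1/2:ℂ))) = ((2 * Real.pi : ℝ) : ℂ) by push_cast; ring]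
    rw [Real.sqrt_eq_rpow, Complex.ofReal_cpow (by positivity)]
    norm_num
  rw [h2, show (0 - ((t:ℂ) * Complex.I)^2 / (4 * -(1/2:ℂ))) = ((-(t^2)/2 : ℝ) : ℂ) by
    push_cast; rw [mul_pow, Complex.I_sq]; ring]
  rw [← Complex.ofReal_exp]
  rw [← mul_assoc, inv_mul_cancel₀, one_mul]
  exact_mod_cast (Real.sqrt_ne_zero').mpr (by positivity)

lemma ProbabilityTheory.IndepFun.integral_mul_complex {Ω : Type*} {mΩ : MeasurableSpace Ω} {μ : Measure Ω}
    {X Y : Ω → ℂ} (h : IndepFun X Y μ) (hX : Integrable X μ) (hY : Integrable Y μ) :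
    ∫ ω, X ω * Y ω ∂μ = (∫ ω, X ω ∂μ) * ∫ ω, Y ω ∂μ := by
  have ha : Integrable (fun ω => (X ω).re) μ := hX.re
  have hb : Integrable (fun ω => (X ω).im) μ := hX.im
  have hc : Integrable (fun ω => (Y ω).re) μ := hY.re
  have hd : Integrable (fun ω => (Y ω).im) μ := hY.im
  have hac := (h.comp Complex.measurable_re Complex.measurable_re).integral_fun_mul_eq_mul_integral ha.aestronglyMeasurable hc.aestronglyMeasurable
  have had := (h.comp Complex.measurable_re Complex.measurable_im).integral_fun_mul_eq_mul_integral ha.aestronglyMeasurable hd.aestronglyMeasurable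
  have hbc := (h.comp Complex.measurable_im Complex.measurable_re).integral_fun_mul_eq_mul_integral hb.aestronglyMeasurable hc.aestronglyMeasurable
  have hbd := (h.comp Complex.measurable_im Complex.measurable_im).integral_fun_mul_eq_mul_integral hb.aestronglyMeasurable hd.aestronglyMeasurable
  have iac : Integrable (fun ω => (X ω).re * (Y ω).re) μ :=
    (h.comp Complex.measurable_re Complex.measurable_re).integrable_mul ha hc
  have iad : Integrable (fun ω => (X ω).re * (Y ω).im) μ :=
    (h.comp Complex.measurable_re Complex.measurable_im).integrable_mul ha hd
  have ibc : Integrable (fun ω => (X ω).im * (Y ω).re) μ :=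
    (h.comp Complex.measurable_im Complex.measurable_re).integrable_mul hb hc
  have ibd : Integrable (fun ω => (X ω).im * (Y ω).im) μ :=
    (h.comp Complex.measurable_im Complex.measurable_im).integrable_mul hb hd
  have decomp : ∀ (f : Ω → ℂ), Integrable f μ →
      ∫ ω, f ω ∂μ = ((∫ ω, (f ω).re ∂μ : ℝ) : ℂ) + ((∫ ω, (f ω).im ∂μ : ℝ) : ℂ) * Complex.I := by
    intro f hf
    rw [← integral_re_add_im hf]
    simp [RCLike.re_to_complex, RCLike.im_to_complex, RCLike.I_to_complex]
  have hXY : Integrable (fun ω => X ω * Y ω) μ := by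
    exact h.integrable_mul hX hY
  rw [decomp _ hXY, decomp _ hX, decomp _ hY]
  have hre : ∀ ω, (X ω * Y ω).re = (X ω).re * (Y ω).re - (X ω).im * (Y ω).im :=
    fun ω => Complex.mul_re _ _
  have him : ∀ ω, (X ω * Y ω).im = (X ω).re * (Y ω).im + (X ω).im * (Y ω).re :=
    fun ω => Complex.mul_im _ _
  simp_rw [hre, him]
  rw [integral_sub iac ibd, integral_add iad ibc]
  have eac : ∫ ω, (X ω).re * (Y ω).re ∂μ = (∫ ω, (X ω).re ∂μ) * ∫ ω, (Y ω).re ∂μ := hac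
  have ead : ∫ ω, (X ω).re * (Y ω).im ∂μ = (∫ ω, (X ω).re ∂μ) * ∫ ω, (Y ω).im ∂μ := had
  have ebc : ∫ ω, (X ω).im * (Y ω).re ∂μ = (∫ ω, (X ω).im ∂μ) * ∫ ω, (Y ω).re ∂μ := hbc
  have ebd : ∫ ω, (X ω).im * (Y ω).im ∂μ = (∫ ω, (X ω).im ∂μ) * ∫ ω, (Y ω).im ∂μ := hbd
  rw [eac, ead, ebc, ebd]
  apply Complex.ext <;>
    simp [Complex.mul_re, Complex.mul_im] <;> ring

lemma norm_cexp_real_mul_I (t x : ℝ) : ‖Complex.exp ((t : ℂ) * Complex.I * (x : ℂ))‖ = 1 := by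
  rw [Complex.norm_exp]
  simp [Complex.mul_re]

lemma omega_integral_finset
    (μ : Measure (ℕ → ℝ)) [IsProbabilityMeasure μ]
    (hindep : iIndepFun (m := fun _ : ℕ => (inferInstance : MeasurableSpace ℝ))
      (fun n (z : ℕ → ℝ) => z n) μ)
    (hdist : ∀ n : ℕ, μ.map (fun z : ℕ → ℝ => z n) = gaussianReal 0 1)
    (c : ℕ → ℝ) (s : Finset ℕ) :
    ∫ z, Complex.exp ((Real.sqrt 2 : ℂ) * Complex.I * ∑ n ∈ s, (c n : ℂ) * (z n : ℂ)) ∂μ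
      = (Real.exp (-∑ n ∈ s, (c n) ^ 2) : ℂ) := by
  classical
  set X : ℕ → (ℕ → ℝ) → ℂ :=
    fun n z => Complex.exp (((Real.sqrt 2 * c n : ℝ) : ℂ) * Complex.I * (z n : ℂ)) with hX
  have hXmeas : ∀ n, Measurable (X n) := by
    intro n; apply Measurable.comp Complex.measurable_exp
    fun_prop
  have hXnorm : ∀ n z, ‖X n z‖ = 1 := fun n z => norm_cexp_real_mul_I _ _
  have hXint : ∀ n, Integrable (X n) μ :=
    fun n => (integrable_const (1 : ℝ)).mono' (hXmeas n).aestronglyMeasurable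
      (ae_of_all _ fun z => (hXnorm n z).le)
  have hXindep : iIndepFun (m := fun _ : ℕ => (inferInstance : MeasurableSpace ℂ)) X μ := by
    have := hindep.comp
      (fun n (x : ℝ) => Complex.exp (((Real.sqrt 2 * c n : ℝ) : ℂ) * Complex.I * (x : ℂ)))
      (fun n => by apply Measurable.comp Complex.measurable_exp; fun_prop)
    exact this
  have hXval : ∀ n, ∫ z, X n z ∂μ = (Real.exp (-(c n) ^ 2) : ℂ) := by
    intro n
    have h1 : ∫ z, X n z ∂μ
        = ∫ x : ℝ, Complex.exp (((Real.sqrt 2 * c n : ℝ) : ℂ) * Complex.I * (x : ℂ))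
            ∂(μ.map (fun z : ℕ → ℝ => z n)) := by
      rw [integral_map (measurable_pi_apply n).aemeasurable]
      exact (Measurable.comp Complex.measurable_exp (by fun_prop)).aestronglyMeasurable
    rw [h1, hdist n, gauss_char]
    congr 1
    rw [mul_pow, Real.sq_sqrt (by norm_num : (0:ℝ) ≤ 2)]
    ring
  have key : ∀ s : Finset ℕ,
      ∫ z, ∏ n ∈ s, X n z ∂μ = ∏ n ∈ s, (Real.exp (-(c n) ^ 2) : ℂ) := by
    intro s
    induction s using Finset.induction_on with
    | empty => simp
    | @insert a s ha ih =>
      have hPint : Integrable (fun z => ∏ j ∈ s, X j z) μ := by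
        refine (integrable_const (1 : ℝ)).mono' ?_ (ae_of_all _ fun z => ?_)
        · exact (Finset.measurable_prod s fun j _ => hXmeas j).aestronglyMeasurable
        · rw [norm_prod]
          simp [hXnorm]
      have hIndep : IndepFun (X a) (fun z => ∏ j ∈ s, X j z) μ := by
        have h2 := (hXindep.indepFun_finset_prod_of_notMem hXmeas ha).symm
        have : (∏ j ∈ s, X j) = fun z => ∏ j ∈ s, X j z := by
          funext z; simp
        rwa [this] at h2
      calc ∫ z, ∏ n ∈ insert a s, X n z ∂μ
          = ∫ z, X a z * ∏ n ∈ s, X n z ∂μ := by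
            congr 1; funext z; exact Finset.prod_insert ha
        _ = (∫ z, X a z ∂μ) * ∫ z, ∏ n ∈ s, X n z ∂μ :=
            hIndep.integral_mul_complex (hXint a) hPint
        _ = ∏ n ∈ insert a s, (Real.exp (-(c n) ^ 2) : ℂ) := by
            rw [hXval a, ih, Finset.prod_insert ha]
  have hsum : ∀ z : ℕ → ℝ,
      Complex.exp ((Real.sqrt 2 : ℂ) * Complex.I * ∑ n ∈ s, (c n : ℂ) * (z n : ℂ))
        = ∏ n ∈ s, X n z := by
    intro z
    rw [← Complex.exp_sum]
    congr 1
    rw [Finset.mul_sum]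
    refine Finset.sum_congr rfl fun n _ => ?_
    push_cast
    ring
  simp_rw [hsum]
  rw [key s]
  rw [← Complex.ofReal_prod]
  congr 1
  rw [← Real.exp_sum]
  congr 1
  rw [← Finset.sum_neg_distrib]

/-- The partial Gaussian exponential `ω_N(z) = exp(√2·i·Σ_{n<N} c n · z n)`. -/
noncomputable def omegaN (c : ℕ → ℝ) (N : ℕ) (z : ℕ → ℝ) : ℂ :=
  Complex.exp ((Real.sqrt 2 : ℂ) * Complex.I * ∑ n ∈ Finset.range N, (c n : ℂ) * (z n : ℂ))

/-- **Extension of the Gaussian exponential map to all of `ℓ²`** (Lemma 3.2).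
`μ` is the countable product over `n : ℕ` of the standard Gaussian measure `N(0,1)` on `ℝ`,
encoded as: `μ` is a probability measure on `ℝ^ℕ` whose coordinate functions are i.i.d.
standard Gaussians.  If `Σ_n (c n)² < ∞` then the functions `ω_N` lie in `L²(μ; ℂ)`, form a
Cauchy sequence there, and converge in `L²(μ)` to some `g` with `|g| = 1` a.e. and
`∫ g dμ = exp(−Σ_n (c n)²)`. -/
theorem gaussian_omega_extension
    (μ : Measure (ℕ → ℝ)) [IsProbabilityMeasure μ]
    (hindep : iIndepFun (m := fun _ : ℕ => (inferInstance : MeasurableSpace ℝ))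
      (fun n (z : ℕ → ℝ) => z n) μ)
    (hdist : ∀ n : ℕ, μ.map (fun z : ℕ → ℝ => z n) = gaussianReal 0 1)
    (c : ℕ → ℝ) (hc : Summable fun n => (c n) ^ 2) :
    ∃ hmem : ∀ N : ℕ, MemLp (omegaN c N) 2 μ,
      CauchySeq (fun N : ℕ => (hmem N).toLp (omegaN c N)) ∧
      ∃ g : Lp ℂ 2 μ,
        Tendsto (fun N : ℕ => (hmem N).toLp (omegaN c N)) atTop (nhds g) ∧
        (∀ᵐ z ∂μ, ‖(g : (ℕ → ℝ) → ℂ) z‖ = 1) ∧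
        ∫ z, (g : (ℕ → ℝ) → ℂ) z ∂μ = (Real.exp (- ∑' n, (c n) ^ 2) : ℂ) := by
    classical
  haveI : Fact ((1 : ℝ≥0∞) ≤ 2) := ⟨one_le_two⟩
  -- pointwise norm one
  have hcast : ∀ (s : Finset ℕ) (z : ℕ → ℝ),
      (Real.sqrt 2 : ℂ) * Complex.I * ∑ n ∈ s, (c n : ℂ) * (z n : ℂ)
        = ((Real.sqrt 2 * ∑ n ∈ s, c n * z n : ℝ) : ℂ) * Complex.I := by
    intro s z; push_cast; ring
  have hnorm : ∀ N z, ‖omegaN c N z‖ = 1 := by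
    intro N z
    rw [omegaN, hcast, Complex.norm_exp_ofReal_mul_I]
  have hmeasN : ∀ N, Measurable (omegaN c N) := by
    intro N; unfold omegaN
    apply Measurable.comp Complex.measurable_exp
    fun_prop
  have hmem : ∀ N, MemLp (omegaN c N) 2 μ := fun N =>
    MemLp.of_bound (hmeasN N).aestronglyMeasurable 1 (ae_of_all _ fun z => (hnorm N z).le)
  set F : ℕ → Lp ℂ 2 μ := fun N => (hmem N).toLp (omegaN c N) with hF
  -- inner products
  have hinner : ∀ M N : ℕ, M ≤ N →
      (inner ℂ (F N) (F M) : ℂ) = (Real.exp (-∑ n ∈ Finset.Ico M N, (c n) ^ 2) : ℂ) := by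
    intro M N hMN
    rw [L2.inner_def]
    have hptr : (fun z => (inner ℂ ((F N : (ℕ → ℝ) → ℂ) z) ((F M : (ℕ → ℝ) → ℂ) z) : ℂ))
        =ᵐ[μ] fun z => (starRingEnd ℂ) (Complex.exp ((Real.sqrt 2 : ℂ) * Complex.I *
            ∑ n ∈ Finset.Ico M N, (c n : ℂ) * (z n : ℂ))) := by
      filter_upwards [(hmem N).coeFn_toLp, (hmem M).coeFn_toLp] with z h1 h2
      rw [RCLike.inner_apply', h1, h2]
      rw [omegaN, omegaN, hcast, hcast, hcast]
      rw [← Complex.exp_conj, ← Complex.exp_conj, ← Complex.exp_add]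
      congr 1
      rw [map_mul, map_mul, Complex.conj_I, Complex.conj_ofReal, Complex.conj_ofReal]
      have e1 : ∑ n ∈ Finset.Ico M N, c n * z n
          = ∑ n ∈ Finset.range N, c n * z n - ∑ n ∈ Finset.range M, c n * z n :=
        Finset.sum_Ico_eq_sub _ hMN
      rw [e1]; push_cast; ring
    rw [integral_congr_ae hptr, integral_conj,
      omega_integral_finset μ hindep hdist c (Finset.Ico M N), Complex.conj_ofReal]
  have hnormsq : ∀ N, ‖F N‖ ^ 2 = 1 := by
    intro N
    rw [← inner_self_eq_norm_sq (𝕜 := ℂ) (F N), hinner N N le_rfl]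
    simp
  have hdistsq : ∀ M N : ℕ, M ≤ N →
      dist (F N) (F M) ^ 2 = 2 * (1 - Real.exp (-∑ n ∈ Finset.Ico M N, (c n) ^ 2)) := by
    intro M N hMN
    rw [dist_eq_norm, norm_sub_sq (𝕜 := ℂ), hnormsq, hnormsq, hinner M N hMN]
    simp only [RCLike.re_to_complex, Complex.ofReal_re]
    ring
  -- tail bounds
  set T : ℕ → ℝ := fun k => ∑' i, (c (i + k)) ^ 2 with hT
  have hTsum : ∀ k, Summable fun i => (c (i + k)) ^ 2 :=
    fun k => (summable_nat_add_iff k).2 hc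
  have hTnonneg : ∀ k, 0 ≤ T k := fun k => tsum_nonneg fun i => sq_nonneg _
  have hTmono : ∀ {k m : ℕ}, k ≤ m → T m ≤ T k := by
    intro k m hkm
    obtain ⟨j, rfl⟩ := Nat.exists_eq_add_of_le hkm
    have h1 := (hTsum k).sum_add_tsum_nat_add j
    have h2 : ∑' i, (c (i + j + k)) ^ 2 = T (k + j) := by
      simp only [hT]
      congr 1; funext i; congr 2; omega
    have h3 : 0 ≤ ∑ i ∈ Finset.range j, (c (i + k)) ^ 2 :=
      Finset.sum_nonneg fun i _ => sq_nonneg _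
    rw [h2] at h1
    simp only [hT] at h1 ⊢
    linarith
  have hIcoB : ∀ M N : ℕ, ∑ n ∈ Finset.Ico M N, (c n) ^ 2 ≤ T M := by
    intro M N
    rw [Finset.sum_Ico_eq_sum_range]
    have : ∀ i, (c (M + i)) ^ 2 = (c (i + M)) ^ 2 := by intro i; rw [add_comm]
    simp_rw [this]
    exact (hTsum M).sum_le_tsum _ (fun i _ => sq_nonneg _)
  -- Cauchy sequence
  have hcauchy : CauchySeq F := by
    apply cauchySeq_of_le_tendsto_0 (fun k => Real.sqrt (2 * (1 - Real.exp (-T k))))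
    · intro n m k hn hm
      have main : ∀ p q : ℕ, k ≤ q → q ≤ p →
          dist (F p) (F q) ≤ Real.sqrt (2 * (1 - Real.exp (-T k))) := by
        intro p q hq hpq
        have h1 : dist (F p) (F q) = Real.sqrt (dist (F p) (F q) ^ 2) :=
          (Real.sqrt_sq dist_nonneg).symm
        rw [h1]
        apply Real.sqrt_le_sqrt
        rw [hdistsq q p hpq]
        have h2 : T q ≤ T k := hTmono hq
        have h3 : ∑ n ∈ Finset.Ico q p, (c n) ^ 2 ≤ T k := le_trans (hIcoB q p) h2
        have h4 : Real.exp (-T k) ≤ Real.exp (-∑ n ∈ Finset.Ico q p, (c n) ^ 2) :=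
          Real.exp_le_exp.2 (neg_le_neg h3)
        linarith
      rcases le_total m n with h | h
      · exact main n m hm h
      · rw [dist_comm]; exact main m n hn h
    · have hT0 : Tendsto T atTop (𝓝 0) := tendsto_sum_nat_add fun i => (c i) ^ 2
      have hcont : Continuous fun x : ℝ => Real.sqrt (2 * (1 - Real.exp (-x))) := by
        fun_prop
      have := (hcont.tendsto 0).comp hT0
      simpa [Function.comp_def] using this
  obtain ⟨g, hg⟩ := cauchySeq_tendsto_of_complete hcauchy
  refine ⟨hmem, hcauchy, g, hg, ?_, ?_⟩
  · -- a.e. norm 1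
    have hLp : Tendsto (fun N => eLpNorm (omegaN c N - (g : (ℕ → ℝ) → ℂ)) 2 μ) atTop (𝓝 0) := by
      have h1 := (Lp.tendsto_Lp_iff_tendsto_eLpNorm' F g).mp hg
      apply h1.congr
      intro N
      apply eLpNorm_congr_ae
      filter_upwards [(hmem N).coeFn_toLp] with z h1
      simp only [Pi.sub_apply]
      rw [h1]
    have hmeasm : TendstoInMeasure μ (fun N => omegaN c N) atTop (g : (ℕ → ℝ) → ℂ) :=
      tendstoInMeasure_of_tendsto_eLpNorm (by norm_num)
        (fun n => (hmem n).aestronglyMeasurable) (Lp.aestronglyMeasurable g) hLp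
    obtain ⟨ns, _, hae⟩ := hmeasm.exists_seq_tendsto_ae
    filter_upwards [hae] with z hz
    have h1 : Tendsto (fun i => ‖omegaN c (ns i) z‖) atTop (𝓝 ‖(g : (ℕ → ℝ) → ℂ) z‖) :=
      hz.norm
    have h2 : Tendsto (fun _ : ℕ => (1 : ℝ)) atTop (𝓝 1) := tendsto_const_nhds
    have h3 : (fun i => ‖omegaN c (ns i) z‖) = fun _ => (1 : ℝ) := by
      funext i; exact hnorm _ _
    rw [h3] at h1
    exact tendsto_nhds_unique h1 h2
  · -- integral
    have hone : MemLp (fun _ : ℕ → ℝ => (1 : ℂ)) 2 μ := memLp_const 1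
    set one2 : Lp ℂ 2 μ := hone.toLp _ with hone2
    have hinner1 : ∀ f : Lp ℂ 2 μ, (inner ℂ one2 f : ℂ) = ∫ z, (f : (ℕ → ℝ) → ℂ) z ∂μ := by
      intro f
      rw [L2.inner_def]
      apply integral_congr_ae
      filter_upwards [hone.coeFn_toLp] with z h1
      rw [RCLike.inner_apply', h1]
      simp
    have hval : ∀ N, (inner ℂ one2 (F N) : ℂ)
        = (Real.exp (-∑ n ∈ Finset.range N, (c n) ^ 2) : ℂ) := by
      intro N
      rw [hinner1 (F N)]
      have : ∫ z, ((F N : (ℕ → ℝ) → ℂ)) z ∂μ = ∫ z, omegaN c N z ∂μ :=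
        integral_congr_ae (hmem N).coeFn_toLp
      rw [this]
      exact omega_integral_finset μ hindep hdist c (Finset.range N)
    have hconv1 : Tendsto (fun N => (inner ℂ one2 (F N) : ℂ)) atTop (𝓝 (inner ℂ one2 g)) :=
      Tendsto.inner tendsto_const_nhds hg
    have hconv2 : Tendsto (fun N => (inner ℂ one2 (F N) : ℂ)) atTop
        (𝓝 ((Real.exp (-∑' n, (c n) ^ 2) : ℝ) : ℂ)) := by
      simp_rw [hval]
      have h1 : Tendsto (fun N => ∑ n ∈ Finset.range N, (c n) ^ 2) atTop
          (𝓝 (∑' n, (c n) ^ 2)) := hc.hasSum.tendsto_sum_nat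
      exact (Complex.continuous_ofReal.tendsto _).comp
        ((Real.continuous_exp.tendsto _).comp h1.neg)
    have := tendsto_nhds_unique hconv1 hconv2
    rw [← hinner1 g, this]
end
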